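/- Let β ∈ (1/2, 1), a > 2 with β·a > a − 1. Then there exist constants c₁, c₂ > 0 such that for every prime p (with n_p the unique positive integer with n_p^a < p ≤ (n_p+1)^a): |1/p^β − 1/n_p^{βa}| ≤ c₂/p^{β+1/a}, and consequently ∑_{p prime} |1/p^β − 1/n_p^{βa}| < ∞. -/

import Mathlib

/-- Bernoulli-type bound: for `1 ≤ x` and `1 ≤ s`, `(x+1)^s - x^s ≤ s * (x+1)^(s-1)`. -/
lemma rpow_succ_sub_le (x s : ℝ) (hx : 1 ≤ x) (hs : 1 ≤ s) :
    (x + 1) ^ s - x ^ s ≤ s * (x + 1) ^ (s - 1) := by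
  have hx1 : (0:ℝ) < x + 1 := by linarith
  have hz : (-1 : ℝ) ≤ -(1 / (x + 1)) := by
    rw [neg_le_neg_iff]
    rw [div_le_one hx1]; linarith
  have hb := one_add_mul_self_le_rpow_one_add hz hs
  have h1 : (1 : ℝ) + -(1 / (x + 1)) = x / (x + 1) := by
    field_simp; ring
  rw [h1] at hb
  have h2 : (x / (x + 1)) ^ s = x ^ s / (x + 1) ^ s := by
    rw [Real.div_rpow (by linarith) hx1.le]
  rw [h2] at hb
  have hpow : (0:ℝ) < (x + 1) ^ s := Real.rpow_pos_of_pos hx1 s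
  have hb' : (1 + s * -(1 / (x + 1))) * (x + 1) ^ s ≤ x ^ s := by
    calc (1 + s * -(1 / (x + 1))) * (x + 1) ^ s
        ≤ (x ^ s / (x + 1) ^ s) * (x + 1) ^ s := by
          exact mul_le_mul_of_nonneg_right hb hpow.le
      _ = x ^ s := by field_simp
  have hsplit : (1 + s * -(1 / (x + 1))) * (x + 1) ^ s
      = (x + 1) ^ s - s * (x + 1) ^ (s - 1) := by
    have : (x + 1) ^ (s - 1) = (x + 1) ^ s / (x + 1) := by
      rw [Real.rpow_sub hx1, Real.rpow_one]
    rw [this]; field_simp; ring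
  rw [hsplit] at hb'
  linarith

theorem stmt16 (β a : ℝ) (hβ : β ∈ Set.Ioo (1/2 : ℝ) 1) (ha : 2 < a)
    (hβa : a - 1 < β * a) :
    ∃ c₂ : ℝ, 0 < c₂ ∧
      (∀ p : ℕ, p.Prime → ∀ n : ℕ, 0 < n →
        (n : ℝ) ^ a < (p : ℝ) → (p : ℝ) ≤ ((n : ℝ) + 1) ^ a →
        |1 / (p : ℝ) ^ β - 1 / (n : ℝ) ^ (β * a)| ≤ c₂ / (p : ℝ) ^ (β + 1 / a)) ∧
      ∀ N : {p : ℕ // p.Prime} → ℕ,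
        (∀ p : {p : ℕ // p.Prime}, 0 < N p ∧ ((N p : ℝ)) ^ a < ((p : ℕ) : ℝ) ∧
          ((p : ℕ) : ℝ) ≤ ((N p : ℝ) + 1) ^ a) →
        Summable (fun p : {p : ℕ // p.Prime} =>
          |1 / (((p : ℕ) : ℝ)) ^ β - 1 / ((N p : ℝ)) ^ (β * a)|) := by
  obtain ⟨hβ0, hβ1⟩ := hβ
  have ha0 : (0:ℝ) < a := by linarith
  have hβpos : (0:ℝ) < β := by linarith
  have hs1 : (1:ℝ) ≤ β * a := by nlinarith
  set s := β * a with hsdef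
  set c₂ := s * 2 ^ s with hc₂def
  have hc₂pos : 0 < c₂ := mul_pos (by linarith) (Real.rpow_pos_of_pos two_pos s)
  have key : ∀ p : ℕ, p.Prime → ∀ n : ℕ, 0 < n →
      (n : ℝ) ^ a < (p : ℝ) → (p : ℝ) ≤ ((n : ℝ) + 1) ^ a →
      |1 / (p : ℝ) ^ β - 1 / (n : ℝ) ^ (β * a)| ≤ c₂ / (p : ℝ) ^ (β + 1 / a) := by
    intro p hp n hn h1 h2
    have hn1 : (1:ℝ) ≤ (n:ℝ) := by exact_mod_cast hn
    have hn0 : (0:ℝ) < (n:ℝ) := by linarith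
    have hp2 : (2:ℝ) ≤ (p:ℝ) := by exact_mod_cast hp.two_le
    have hp0 : (0:ℝ) < (p:ℝ) := by linarith
    -- n^s < p^β ≤ (n+1)^s
    have hns : ((n:ℝ)) ^ s = ((n:ℝ) ^ a) ^ β := by
      rw [← Real.rpow_mul hn0.le, hsdef, mul_comm]
    have hn1s : ((n:ℝ) + 1) ^ s = (((n:ℝ) + 1) ^ a) ^ β := by
      rw [← Real.rpow_mul (by positivity)]; ring_nf; rw [hsdef, mul_comm β a]
    have hlow : ((n:ℝ)) ^ s < (p:ℝ) ^ β := by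
      rw [hns]
      exact Real.rpow_lt_rpow (by positivity) h1 hβpos
    have hhigh : (p:ℝ) ^ β ≤ ((n:ℝ) + 1) ^ s := by
      rw [hn1s]
      exact Real.rpow_le_rpow hp0.le h2 hβpos.le
    have hnspos : (0:ℝ) < ((n:ℝ)) ^ s := Real.rpow_pos_of_pos hn0 s
    have hpβpos : (0:ℝ) < (p:ℝ) ^ β := Real.rpow_pos_of_pos hp0 β
    -- absolute value
    have habs : |1 / (p : ℝ) ^ β - 1 / (n : ℝ) ^ (β * a)|
        = ((p:ℝ) ^ β - (n:ℝ) ^ s) / ((n:ℝ) ^ s * (p:ℝ) ^ β) := by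
      rw [← hsdef, abs_sub_comm, abs_of_nonneg]
      · field_simp
      · have : 1 / (p:ℝ) ^ β ≤ 1 / (n:ℝ) ^ s :=
          one_div_le_one_div_of_le hnspos hlow.le
        linarith
    rw [habs]
    -- numerator bound
    have hnum : (p:ℝ) ^ β - (n:ℝ) ^ s ≤ s * ((n:ℝ) + 1) ^ (s - 1) := by
      have := rpow_succ_sub_le (n:ℝ) s hn1 hs1
      linarith
    -- p^{1/a} ≤ n+1
    have hpa : (p:ℝ) ^ (1/a) ≤ (n:ℝ) + 1 := by
      have : (p:ℝ) ^ (1/a) ≤ (((n:ℝ) + 1) ^ a) ^ (1/a) :=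
        Real.rpow_le_rpow hp0.le h2 (by positivity)
      rwa [← Real.rpow_mul (by positivity), mul_one_div, div_self (ne_of_gt ha0),
        Real.rpow_one] at this
    have hpapos : (0:ℝ) < (p:ℝ) ^ (1/a) := Real.rpow_pos_of_pos hp0 _
    have hn1pos : (0:ℝ) < (n:ℝ) + 1 := by linarith
    -- (n+1)^s ≤ 2^s n^s
    have h2n : ((n:ℝ) + 1) ^ s ≤ 2 ^ s * (n:ℝ) ^ s := by
      calc ((n:ℝ) + 1) ^ s ≤ (2 * (n:ℝ)) ^ s :=
            Real.rpow_le_rpow hn1pos.le (by linarith) (by linarith)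
        _ = 2 ^ s * (n:ℝ) ^ s := Real.mul_rpow (by norm_num) hn0.le
    -- main comparison: reduce to products
    rw [div_le_div_iff₀ (by positivity) (Real.rpow_pos_of_pos hp0 _)]
    have hsplitp : (p:ℝ) ^ (β + 1/a) = (p:ℝ) ^ β * (p:ℝ) ^ (1/a) := Real.rpow_add hp0 _ _
    rw [hsplitp]
    have hstep : ((n:ℝ) + 1) ^ (s - 1) * (p:ℝ) ^ (1/a) ≤ 2 ^ s * (n:ℝ) ^ s := by
      calc ((n:ℝ) + 1) ^ (s - 1) * (p:ℝ) ^ (1/a)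
          ≤ ((n:ℝ) + 1) ^ (s - 1) * ((n:ℝ) + 1) := by
            exact mul_le_mul_of_nonneg_left hpa (by positivity)
        _ = ((n:ℝ) + 1) ^ s := by
            nth_rewrite 2 [← Real.rpow_one ((n:ℝ)+1)]
            rw [← Real.rpow_add hn1pos]; norm_num
        _ ≤ 2 ^ s * (n:ℝ) ^ s := h2n
    calc ((p:ℝ) ^ β - (n:ℝ) ^ s) * ((p:ℝ) ^ β * (p:ℝ) ^ (1/a))
        ≤ (s * ((n:ℝ) + 1) ^ (s - 1)) * ((p:ℝ) ^ β * (p:ℝ) ^ (1/a)) := by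
          apply mul_le_mul_of_nonneg_right hnum (by positivity)
      _ = s * (((n:ℝ) + 1) ^ (s - 1) * (p:ℝ) ^ (1/a)) * (p:ℝ) ^ β := by ring
      _ ≤ s * (2 ^ s * (n:ℝ) ^ s) * (p:ℝ) ^ β := by
          apply mul_le_mul_of_nonneg_right _ hpβpos.le
          exact mul_le_mul_of_nonneg_left hstep (by linarith)
      _ = c₂ * ((n:ℝ) ^ s * (p:ℝ) ^ β) := by rw [hc₂def]; ring
  refine ⟨c₂, hc₂pos, key, ?_⟩
  intro N hN
  have hsum : Summable (fun p : Nat.Primes => (p : ℝ) ^ (-(β + 1/a))) := by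
    apply Nat.Primes.summable_rpow.mpr
    have h1 : (a-1)/a < β := by rw [div_lt_iff₀ ha0]; nlinarith
    have h2 : (a-1)/a + 1/a = 1 := by field_simp; ring
    linarith
  apply Summable.of_nonneg_of_le (fun p => abs_nonneg _)
    (fun p => ?_) (hsum.mul_left c₂)
  have hp := hN p
  have := key (p : ℕ) p.2 (N p) hp.1 hp.2.1 hp.2.2
  calc |1 / (((p : ℕ) : ℝ)) ^ β - 1 / ((N p : ℝ)) ^ (β * a)|
      ≤ c₂ / ((p : ℕ) : ℝ) ^ (β + 1 / a) := this
    _ = c₂ * ((p : ℕ) : ℝ) ^ (-(β + 1/a)) := by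
        rw [Real.rpow_neg (by positivity), div_eq_mul_inv]
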